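/- Non-Markovianity can increase under local (time-local) superprocesses: for Υ = |0⟩⟨0|_B ⊗ (1/2)(|0⟩⟨0|_C ⊗ Φ_{AD} + |1⟩⟨1|_C ⊗ (𝕀/2)_A ⊗ (𝕀/2)_D) and Υ' = Φ_{AD} ⊗ (𝕀/4)_{BC}, the mutual-information-based quantities satisfy N(Υ) = H(Υ_{AB}) + H(Υ_{CD}) − H(Υ) = 1 and N(Υ') = H(Υ'_{AB}) + H(Υ'_{CD}) − H(Υ') = 2, so N(Υ') > N(Υ). -/

import Mathlib

open Matrix Kronecker
open scoped ComplexOrder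

noncomputable section

/-- Base-2 matrix logarithm of a Hermitian matrix, via the spectral theorem
(with the convention `log 0 = 0`); `0` on non-Hermitian matrices. -/
def mlog2 {n : Type*} [Fintype n] [DecidableEq n] (A : Matrix n n ℂ) : Matrix n n ℂ :=
  if h : A.IsHermitian then
    (h.eigenvectorUnitary : Matrix n n ℂ) *
      Matrix.diagonal (fun i => (Real.logb 2 (h.eigenvalues i) : ℂ)) *
      (star h.eigenvectorUnitary : Matrix n n ℂ)
  else 0

/-- Quantum relative entropy `S(ρ‖σ) = Tr[ρ (log₂ ρ − log₂ σ)]`. -/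
def relEnt {n : Type*} [Fintype n] [DecidableEq n] (ρ σ : Matrix n n ℂ) : ℝ :=
  (Matrix.trace (ρ * (mlog2 ρ - mlog2 σ))).re

/-- Von Neumann entropy `H(ρ) = −Tr[ρ log₂ ρ]`. -/
def vnEnt {n : Type*} [Fintype n] [DecidableEq n] (ρ : Matrix n n ℂ) : ℝ :=
  -(Matrix.trace (ρ * mlog2 ρ)).re

/-- A density matrix: positive semidefinite with unit trace. -/
def IsDensity {n : Type*} [Fintype n] (ρ : Matrix n n ℂ) : Prop :=
  ρ.PosSemidef ∧ ρ.trace = 1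

/-- Partial trace over the second (B) factor. -/
def ptraceB {m n : Type*} [Fintype n] (M : Matrix (m × n) (m × n) ℂ) : Matrix m m ℂ :=
  Matrix.of fun i j => ∑ k, M (i, k) (j, k)

/-- Partial trace over the first (A) factor. -/
def ptraceA {m n : Type*} [Fintype m] (M : Matrix (m × n) (m × n) ℂ) : Matrix n n ℂ :=
  Matrix.of fun a b => ∑ k, M (k, a) (k, b)

/-- The Choi state `(id ⊗ M)(Φ)` of a map `M : M_d(ℂ) → M_{d'}(ℂ)`, where
`Φ = (1/d) ∑_{i,j} |ii⟩⟨jj|` is the maximally entangled state. -/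
def ChoiOf {d d' : ℕ} (M : Matrix (Fin d) (Fin d) ℂ → Matrix (Fin d') (Fin d') ℂ) :
    Matrix (Fin d × Fin d') (Fin d × Fin d') ℂ :=
  Matrix.of fun p q =>
    ((d : ℂ))⁻¹ * M (Matrix.single p.1 q.1 1) p.2 q.2

/-- Complete positivity of a linear map on matrices: every finite ancilla
extension `id_k ⊗ M` maps positive semidefinite matrices to positive
semidefinite matrices. -/
def IsCompletelyPositive {n m : Type*} [Fintype n] [DecidableEq n] [Fintype m] [DecidableEq m]
    (M : Matrix n n ℂ →ₗ[ℂ] Matrix m m ℂ) : Prop :=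
  ∀ (k : ℕ) (X : Matrix (Fin k × n) (Fin k × n) ℂ), X.PosSemidef →
    (Matrix.of fun (p q : Fin k × m) =>
      M (Matrix.of fun a b => X (p.1, a) (q.1, b)) p.2 q.2).PosSemidef

/-- The classical-quantum state `∑_x p_x |x⟩⟨x| ⊗ ρ_x`. -/
def cqState {ι m : Type*} [DecidableEq ι] (p : ι → ℝ) (ρ : ι → Matrix m m ℂ) :
    Matrix (ι × m) (ι × m) ℂ :=
  Matrix.of fun x y => if x.1 = y.1 then (p x.1 : ℂ) * ρ x.1 x.2 y.2 else 0

/-- The maximally entangled two-qubit state `Φ = (1/2) ∑_{i,j} |ii⟩⟨jj|`. -/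
def Phi2 : Matrix (Fin 2 × Fin 2) (Fin 2 × Fin 2) ℂ :=
  Matrix.of fun p q => if p.1 = p.2 ∧ q.1 = q.2 then (1 / 2 : ℂ) else 0

end

noncomputable section
/-- The Choi state `Υ = |0⟩⟨0|_B ⊗ (1/2)(|0⟩⟨0|_C ⊗ Φ_{AD} + |1⟩⟨1|_C ⊗ 𝕀/2 ⊗ 𝕀/2)`,
with index grouping `((a,b),(c,d))`. -/
def Y1 : Matrix ((Fin 2 × Fin 2) × (Fin 2 × Fin 2)) ((Fin 2 × Fin 2) × (Fin 2 × Fin 2)) ℂ :=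
  Matrix.of fun x y =>
    (if x.1.2 = 0 ∧ y.1.2 = 0 then 1 else 0) *
      ((1 / 2 : ℂ) *
        ((if x.2.1 = 0 ∧ y.2.1 = 0 then Phi2 (x.1.1, x.2.2) (y.1.1, y.2.2) else 0) +
          (if x.2.1 = 1 ∧ y.2.1 = 1 then
            (if x.1.1 = y.1.1 ∧ x.2.2 = y.2.2 then (1 / 4 : ℂ) else 0) else 0)))

/-- The Choi state `Υ' = Φ_{AD} ⊗ (𝕀/4)_{BC}` after the local superprocess. -/
def Y2 : Matrix ((Fin 2 × Fin 2) × (Fin 2 × Fin 2)) ((Fin 2 × Fin 2) × (Fin 2 × Fin 2)) ℂ :=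
  Matrix.of fun x y =>
    Phi2 (x.1.1, x.2.2) (y.1.1, y.2.2) *
      (if x.1.2 = y.1.2 ∧ x.2.1 = y.2.1 then (1 / 4 : ℂ) else 0)

/-- The mutual-information-based non-Markovianity quantifier
`N(Υ) = H(Υ_AB) + H(Υ_CD) − H(Υ)`. -/
def NMI (Υ : Matrix ((Fin 2 × Fin 2) × (Fin 2 × Fin 2)) ((Fin 2 × Fin 2) × (Fin 2 × Fin 2)) ℂ) : ℝ :=
  vnEnt (ptraceB Υ) + vnEnt (ptraceA Υ) - vnEnt Υ
end

noncomputable section Aux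
namespace NMIAux
open Matrix

variable {n : Type*} [Fintype n] [DecidableEq n]

lemma trace_mul_mlog2 {A : Matrix n n ℂ} (hA : A.IsHermitian) :
    Matrix.trace (A * mlog2 A) =
      ∑ i, ((hA.eigenvalues i : ℂ) * (Real.logb 2 (hA.eigenvalues i) : ℂ)) := by
  rw [mlog2, dif_pos hA]
  set U := (hA.eigenvectorUnitary : Matrix n n ℂ) with hUdef
  set D : Matrix n n ℂ := Matrix.diagonal (RCLike.ofReal ∘ hA.eigenvalues) with hDdef
  set L := Matrix.diagonal (fun i => (Real.logb 2 (hA.eigenvalues i) : ℂ)) with hLdef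
  have hspec : A = U * D * star U := hA.spectral_theorem
  conv_lhs => rw [hspec]
  have hU : star U * U = 1 := Matrix.mem_unitaryGroup_iff'.mp hA.eigenvectorUnitary.2
  have : U * D * star U * (U * L * star U) = U * (D * L) * star U := by
    calc U * D * star U * (U * L * star U) = U * D * (star U * U) * L * star U := by
            simp only [Matrix.mul_assoc]
      _ = U * (D * L) * star U := by rw [hU]; simp only [Matrix.mul_assoc, Matrix.mul_one, Matrix.one_mul]
  rw [this, Matrix.trace_mul_cycle, ← Matrix.mul_assoc, hU, one_mul, Matrix.diagonal_mul_diagonal,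
    Matrix.trace_diagonal]
  rfl

lemma trace_eq_sum_eig {A : Matrix n n ℂ} (hA : A.IsHermitian) :
    Matrix.trace A = ∑ i, (hA.eigenvalues i : ℂ) := by
  conv_lhs => rw [show A = (hA.eigenvectorUnitary : Matrix n n ℂ) * Matrix.diagonal (RCLike.ofReal ∘ hA.eigenvalues) * star (hA.eigenvectorUnitary : Matrix n n ℂ) from hA.spectral_theorem]
  rw [Matrix.trace_mul_cycle, Matrix.mem_unitaryGroup_iff'.mp hA.eigenvectorUnitary.2,
    Matrix.one_mul, Matrix.trace_diagonal]
  rfl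

lemma trace_sq_eq_sum_eig {A : Matrix n n ℂ} (hA : A.IsHermitian) :
    Matrix.trace (A * A) = ∑ i, ((hA.eigenvalues i : ℂ))^2 := by
  set U := (hA.eigenvectorUnitary : Matrix n n ℂ) with hUdef
  set D : Matrix n n ℂ := Matrix.diagonal (RCLike.ofReal ∘ hA.eigenvalues) with hDdef
  have hspec : A = U * D * star U := hA.spectral_theorem
  have hU : star U * U = 1 := Matrix.mem_unitaryGroup_iff'.mp hA.eigenvectorUnitary.2
  conv_lhs => rw [hspec]
  have : U * D * star U * (U * D * star U) = U * (D * D) * star U := by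
    calc U * D * star U * (U * D * star U) = U * D * (star U * U) * D * star U := by
            simp only [Matrix.mul_assoc]
      _ = U * (D * D) * star U := by rw [hU]; simp only [Matrix.mul_assoc, Matrix.mul_one, Matrix.one_mul]
  rw [this, Matrix.trace_mul_cycle, ← Matrix.mul_assoc, hU, Matrix.one_mul,
    Matrix.diagonal_mul_diagonal, Matrix.trace_diagonal]
  simp [sq]

lemma eig_mem3 {A : Matrix n n ℂ} (hA : A.IsHermitian) {b c : ℝ}
    (h : A * A * A = ((b + c : ℂ)) • (A * A) - ((b * c : ℂ)) • A) (i : n) :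
    hA.eigenvalues i = 0 ∨ hA.eigenvalues i = b ∨ hA.eigenvalues i = c := by
  have hv := hA.mulVec_eigenvectorBasis i
  rw [RCLike.real_smul_eq_coe_smul (K := ℂ)] at hv
  set v := (⇑(hA.eigenvectorBasis i) : n → ℂ) with hvdef
  have hv' : A *ᵥ v = ((hA.eigenvalues i : ℂ)) • v := by exact_mod_cast hv
  have hnz : v ≠ 0 := by
    have := hA.eigenvectorBasis.orthonormal.1 i
    intro h0
    rw [show ((hA.eigenvectorBasis i : EuclideanSpace ℂ n)) = 0 from by ext j; exact congrFun h0 j] at this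
    simp at this
  have h2 : (A * A) *ᵥ v = ((hA.eigenvalues i : ℂ) * (hA.eigenvalues i : ℂ)) • v := by
    rw [← Matrix.mulVec_mulVec, hv', Matrix.mulVec_smul, hv', smul_smul]
  have h3 : (A * A * A) *ᵥ v
      = ((hA.eigenvalues i : ℂ) * (hA.eigenvalues i : ℂ) * (hA.eigenvalues i : ℂ)) • v := by
    rw [← Matrix.mulVec_mulVec, hv', Matrix.mulVec_smul, h2, smul_smul, ← mul_assoc]
  rw [h, Matrix.sub_mulVec, Matrix.smul_mulVec, Matrix.smul_mulVec, h2, hv',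
    smul_smul, smul_smul] at h3
  have h4 := sub_eq_zero.mpr h3
  rw [← sub_smul, ← sub_smul] at h4
  have h5 := (smul_eq_zero.mp h4).resolve_right hnz
  have h6 : (hA.eigenvalues i : ℂ) * (((hA.eigenvalues i : ℂ) - b) * ((hA.eigenvalues i : ℂ) - c)) = 0 := by
    linear_combination -h5
  rcases mul_eq_zero.mp h6 with h7 | h7
  · left; exact_mod_cast h7
  rcases mul_eq_zero.mp h7 with h7 | h7
  · right; left
    have : (hA.eigenvalues i : ℂ) = (b : ℂ) := by linear_combination h7
    exact_mod_cast this
  · right; right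
    have : (hA.eigenvalues i : ℂ) = (c : ℂ) := by linear_combination h7
    exact_mod_cast this

lemma eig_mem {A : Matrix n n ℂ} (hA : A.IsHermitian) {c : ℝ}
    (h : A * A = (c : ℂ) • A) (i : n) : hA.eigenvalues i = 0 ∨ hA.eigenvalues i = c := by
  have h3 : A * A * A = ((c + 0 : ℂ)) • (A * A) - ((c * 0 : ℂ)) • A := by
    rw [mul_assoc, h, Matrix.mul_smul, h, smul_smul]
    module
  exact (eig_mem3 hA h3 i).elim Or.inl (fun h' => h'.elim Or.inr Or.inl)

lemma logb_half : Real.logb 2 (1/2) = -1 := by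
  rw [show (1/2 : ℝ) = 2⁻¹ by norm_num, Real.logb_inv, Real.logb_self_eq_one] <;> norm_num

lemma logb_quarter : Real.logb 2 (1/4) = -2 := by
  rw [show (1/4 : ℝ) = ((2:ℝ)^(2:ℕ))⁻¹ by norm_num, Real.logb_inv, Real.logb_pow,
    Real.logb_self_eq_one] <;> norm_num

lemma logb_eighth : Real.logb 2 (1/8) = -3 := by
  rw [show (1/8 : ℝ) = ((2:ℝ)^(3:ℕ))⁻¹ by norm_num, Real.logb_inv, Real.logb_pow,
    Real.logb_self_eq_one] <;> norm_num

lemma vnEnt_quad {A : Matrix n n ℂ} (hA : A.IsHermitian) {c t : ℝ}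
    (h : A * A = (c : ℂ) • A) (htr : Matrix.trace A = (t : ℂ)) :
    vnEnt A = -(Real.logb 2 c) * t := by
  have hsum : ∑ i, hA.eigenvalues i = t := by
    have := trace_eq_sum_eig hA
    rw [htr] at this
    exact_mod_cast this.symm
  have hre : (Matrix.trace (A * mlog2 A)).re = ∑ i, hA.eigenvalues i * Real.logb 2 (hA.eigenvalues i) := by
    rw [trace_mul_mlog2 hA, Complex.re_sum]
    congr 1; funext i
    norm_cast
  rw [vnEnt, hre]
  have heach : ∀ i, hA.eigenvalues i * Real.logb 2 (hA.eigenvalues i)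
      = Real.logb 2 c * hA.eigenvalues i := by
    intro i
    rcases eig_mem hA h i with h0 | h0 <;> rw [h0] <;> ring
  rw [Finset.sum_congr rfl (fun i _ => heach i), ← Finset.mul_sum, hsum]
  ring

lemma vnEnt_cubic {A : Matrix n n ℂ} (hA : A.IsHermitian)
    (h : A * A * A = (((1/2 : ℝ) + (1/8 : ℝ) : ℂ)) • (A * A) - (((1/2 : ℝ) * (1/8 : ℝ) : ℂ)) • A)
    (htr : Matrix.trace A = 1) (htr2 : Matrix.trace (A * A) = ((5/16 : ℝ) : ℂ)) :
    vnEnt A = 2 := by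
  have hsum : ∑ i, hA.eigenvalues i = 1 := by
    have := trace_eq_sum_eig hA
    rw [htr] at this
    exact_mod_cast this.symm
  have hsum2 : ∑ i, (hA.eigenvalues i)^2 = 5/16 := by
    have := trace_sq_eq_sum_eig hA
    rw [htr2] at this
    exact_mod_cast this.symm
  have hre : (Matrix.trace (A * mlog2 A)).re
      = ∑ i, hA.eigenvalues i * Real.logb 2 (hA.eigenvalues i) := by
    rw [trace_mul_mlog2 hA, Complex.re_sum]
    congr 1; funext i
    norm_cast
  rw [vnEnt, hre]
  have heach : ∀ i, hA.eigenvalues i * Real.logb 2 (hA.eigenvalues i)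
      = -(11/3) * hA.eigenvalues i + (16/3) * (hA.eigenvalues i)^2 := by
    intro i
    rcases eig_mem3 hA h i with h0 | h0 | h0 <;> rw [h0]
    · ring
    · rw [logb_half]; ring
    · rw [logb_eighth]; ring
  rw [Finset.sum_congr rfl (fun i _ => heach i), Finset.sum_add_distrib, ← Finset.mul_sum,
    ← Finset.mul_sum, hsum, hsum2]
  norm_num

/-! Transfer from integer matrices. -/

def mapZ (M : Matrix n n ℤ) : Matrix n n ℂ := (Int.castRingHom ℂ).mapMatrix M

lemma mapZ_apply (M : Matrix n n ℤ) (i j : n) : mapZ M i j = ((M i j : ℤ) : ℂ) := rfl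

lemma mapZ_mul (M N : Matrix n n ℤ) : mapZ (M * N) = mapZ M * mapZ N :=
  map_mul (Int.castRingHom ℂ).mapMatrix M N

lemma mapZ_trace (M : Matrix n n ℤ) : Matrix.trace (mapZ M) = ((Matrix.trace M : ℤ) : ℂ) := by
  simp [mapZ, Matrix.trace, Matrix.diag, RingHom.mapMatrix_apply, Matrix.map_apply]

lemma mapZ_conjTranspose (M : Matrix n n ℤ) : (mapZ M)ᴴ = mapZ Mᵀ := by
  ext i j
  simp [mapZ, Matrix.conjTranspose_apply, RingHom.mapMatrix_apply, Matrix.map_apply]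

lemma herm_scaled {M : Matrix n n ℤ} (h : Mᵀ = M) (r : ℝ) :
    (((r : ℂ)) • mapZ M).IsHermitian := by
  unfold Matrix.IsHermitian
  rw [Matrix.conjTranspose_smul, mapZ_conjTranspose, h]
  congr 1
  exact Complex.conj_ofReal r

lemma smul_mapZ_mul (s : ℂ) (M N : Matrix n n ℤ) :
    (s • mapZ M) * (s • mapZ N) = (s * s) • mapZ (M * N) := by
  rw [Matrix.smul_mul, Matrix.mul_smul, smul_smul, mapZ_mul]

lemma mapZ_zsmul (k : ℤ) (M : Matrix n n ℤ) : mapZ (k • M) = (k : ℂ) • mapZ M := by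
  ext i j
  rw [mapZ_apply, Matrix.smul_apply, Matrix.smul_apply, mapZ_apply, smul_eq_mul, smul_eq_mul]
  push_cast
  ring

end NMIAux
end Aux
noncomputable section Spec
namespace NMIAux
open Matrix

abbrev Q4 := (Fin 2 × Fin 2) × (Fin 2 × Fin 2)
abbrev Q2 := Fin 2 × Fin 2

def ZY1 : Matrix Q4 Q4 ℤ :=
  Matrix.of fun x y =>
    (if x.1.2 = 0 ∧ y.1.2 = 0 then 1 else 0) *
      ((if x.2.1 = 0 ∧ y.2.1 = 0 then (if x.1.1 = x.2.2 ∧ y.1.1 = y.2.2 then 2 else 0) else 0) +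
        (if x.2.1 = 1 ∧ y.2.1 = 1 then (if x.1.1 = y.1.1 ∧ x.2.2 = y.2.2 then 1 else 0) else 0))

def ZY2 : Matrix Q4 Q4 ℤ :=
  Matrix.of fun x y =>
    (if x.1.1 = x.2.2 ∧ y.1.1 = y.2.2 then 1 else 0) *
      (if x.1.2 = y.1.2 ∧ x.2.1 = y.2.1 then 1 else 0)

def ptraceBZ (M : Matrix Q4 Q4 ℤ) : Matrix Q2 Q2 ℤ := Matrix.of fun i j => ∑ k, M (i,k) (j,k)
def ptraceAZ (M : Matrix Q4 Q4 ℤ) : Matrix Q2 Q2 ℤ := Matrix.of fun a b => ∑ k, M (k,a) (k,b)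

lemma mapZ_sub {I : Type*} [Fintype I] [DecidableEq I] (M N : Matrix I I ℤ) :
    mapZ (M - N) = mapZ M - mapZ N :=
  map_sub ((Int.castRingHom ℂ).mapMatrix) M N

lemma Y1_eq : Y1 = (((1/8 : ℝ) : ℂ)) • mapZ ZY1 := by
  ext x y
  simp only [Y1, ZY1, Phi2, Matrix.of_apply, Matrix.smul_apply, mapZ_apply,
    apply_ite (fun z : ℤ => (z : ℂ)), smul_eq_mul]
  push_cast
  split_ifs <;> norm_num

lemma Y2_eq : Y2 = (((1/8 : ℝ) : ℂ)) • mapZ ZY2 := by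
  ext x y
  simp only [Y2, ZY2, Phi2, Matrix.of_apply, Matrix.smul_apply, mapZ_apply,
    apply_ite (fun z : ℤ => (z : ℂ)), smul_eq_mul]
  push_cast
  split_ifs <;> norm_num

lemma ptraceB_smul (c : ℂ) (M : Matrix Q4 Q4 ℂ) : ptraceB (c • M) = c • ptraceB M := by
  ext i j
  simp [ptraceB, Finset.mul_sum]

lemma ptraceA_smul (c : ℂ) (M : Matrix Q4 Q4 ℂ) : ptraceA (c • M) = c • ptraceA M := by
  ext i j
  simp [ptraceA, Finset.mul_sum]

lemma ptraceB_mapZ (M : Matrix Q4 Q4 ℤ) : ptraceB (mapZ M) = mapZ (ptraceBZ M) := by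
  ext i j
  simp only [ptraceB, ptraceBZ, Matrix.of_apply, mapZ_apply]
  push_cast
  rfl

lemma ptraceA_mapZ (M : Matrix Q4 Q4 ℤ) : ptraceA (mapZ M) = mapZ (ptraceAZ M) := by
  ext i j
  simp only [ptraceA, ptraceAZ, Matrix.of_apply, mapZ_apply]
  push_cast
  rfl

lemma zf1 : ZY1 * ZY1 * ZY1 = (5:ℤ) • (ZY1 * ZY1) - (4:ℤ) • ZY1 := by decide
lemma zf2 : ZY1.trace = 8 := by decide
lemma zf3 : (ZY1 * ZY1).trace = 20 := by decide
lemma zf4 : ZY1ᵀ = ZY1 := by decide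
lemma zg1 : ptraceBZ ZY1 * ptraceBZ ZY1 = (4:ℤ) • ptraceBZ ZY1 := by decide
lemma zg2 : (ptraceBZ ZY1).trace = 8 := by decide
lemma zg3 : (ptraceBZ ZY1)ᵀ = ptraceBZ ZY1 := by decide
lemma zh1 : ptraceAZ ZY1 * ptraceAZ ZY1 = (2:ℤ) • ptraceAZ ZY1 := by decide
lemma zh2 : (ptraceAZ ZY1).trace = 8 := by decide
lemma zh3 : (ptraceAZ ZY1)ᵀ = ptraceAZ ZY1 := by decide
lemma zk1 : ZY2 * ZY2 = (2:ℤ) • ZY2 := by decide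
lemma zk2 : ZY2.trace = 8 := by decide
lemma zk3 : ZY2ᵀ = ZY2 := by decide
lemma zm1 : ptraceBZ ZY2 * ptraceBZ ZY2 = (2:ℤ) • ptraceBZ ZY2 := by decide
lemma zm2 : (ptraceBZ ZY2).trace = 8 := by decide
lemma zm3 : (ptraceBZ ZY2)ᵀ = ptraceBZ ZY2 := by decide
lemma zn1 : ptraceAZ ZY2 * ptraceAZ ZY2 = (2:ℤ) • ptraceAZ ZY2 := by decide
lemma zn2 : (ptraceAZ ZY2).trace = 8 := by decide
lemma zn3 : (ptraceAZ ZY2)ᵀ = ptraceAZ ZY2 := by decide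

lemma vnEnt_of_int {I : Type*} [Fintype I] [DecidableEq I] (M : Matrix I I ℤ) (k : ℤ)
    (hsym : Mᵀ = M) (hq : M * M = k • M) (htr : M.trace = 8) :
    vnEnt ((((1/8 : ℝ) : ℂ)) • mapZ M) = -(Real.logb 2 ((k : ℝ)/8)) * 1 := by
  have hA := herm_scaled hsym (1/8)
  apply vnEnt_quad hA
  · rw [smul_mapZ_mul, hq, mapZ_zsmul, smul_smul, smul_smul]
    congr 1
    push_cast
    ring
  · rw [Matrix.trace_smul, mapZ_trace, htr]
    push_cast
    norm_num

lemma vnEnt_Y1 : vnEnt Y1 = 2 := by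
  rw [Y1_eq]
  set s : ℂ := ((1/8 : ℝ) : ℂ) with hs
  have hA := herm_scaled zf4 (1/8)
  have e1 : (s • mapZ ZY1) * (s • mapZ ZY1) = (s * s) • mapZ (ZY1 * ZY1) := smul_mapZ_mul s _ _
  have e2 : (s • mapZ ZY1) * (s • mapZ ZY1) * (s • mapZ ZY1)
      = (s * s * s) • mapZ (ZY1 * ZY1 * ZY1) := by
    rw [e1, Matrix.smul_mul, Matrix.mul_smul, smul_smul, mapZ_mul (ZY1*ZY1) ZY1]
  apply vnEnt_cubic hA
  · rw [e2, e1, zf1, mapZ_sub, mapZ_zsmul, mapZ_zsmul]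
    rw [smul_sub, smul_smul, smul_smul, smul_smul, smul_smul]
    congr 1
    · congr 1
      rw [hs]; push_cast; norm_num
    · congr 1
      rw [hs]; push_cast; norm_num
  · rw [Matrix.trace_smul, mapZ_trace, zf2]
    push_cast
    norm_num [smul_eq_mul]
  · rw [e1, Matrix.trace_smul, mapZ_trace, zf3]
    rw [hs]
    push_cast
    norm_num [smul_eq_mul]

lemma vnEnt_Y2 : vnEnt Y2 = 2 := by
  rw [Y2_eq, vnEnt_of_int ZY2 2 zk3 zk1 zk2]
  norm_num [show ((2:ℝ))/8 = 1/4 by norm_num, logb_quarter]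

lemma vnEnt_Y1B : vnEnt (ptraceB Y1) = 1 := by
  rw [Y1_eq, ptraceB_smul, ptraceB_mapZ, vnEnt_of_int _ 4 zg3 zg1 zg2]
  norm_num [show ((4:ℝ))/8 = 1/2 by norm_num, logb_half]

lemma vnEnt_Y1A : vnEnt (ptraceA Y1) = 2 := by
  rw [Y1_eq, ptraceA_smul, ptraceA_mapZ, vnEnt_of_int _ 2 zh3 zh1 zh2]
  norm_num [show ((2:ℝ))/8 = 1/4 by norm_num, logb_quarter]

lemma vnEnt_Y2B : vnEnt (ptraceB Y2) = 2 := by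
  rw [Y2_eq, ptraceB_smul, ptraceB_mapZ, vnEnt_of_int _ 2 zm3 zm1 zm2]
  norm_num [show ((2:ℝ))/8 = 1/4 by norm_num, logb_quarter]

lemma vnEnt_Y2A : vnEnt (ptraceA Y2) = 2 := by
  rw [Y2_eq, ptraceA_smul, ptraceA_mapZ, vnEnt_of_int _ 2 zn3 zn1 zn2]
  norm_num [show ((2:ℝ))/8 = 1/4 by norm_num, logb_quarter]

end NMIAux
end Spec
/-- non-Markovianity can increase under local superprocesses:
`N(Υ) = 1` and `N(Υ') = 2`, so `N(Υ') > N(Υ)`. -/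
theorem nonMarkovianity_increases : NMI Y1 = 1 ∧ NMI Y2 = 2 ∧ NMI Y1 < NMI Y2 := by
  have h1 : NMI Y1 = 1 := by
    rw [NMI, NMIAux.vnEnt_Y1, NMIAux.vnEnt_Y1B, NMIAux.vnEnt_Y1A]
    norm_num
  have h2 : NMI Y2 = 2 := by
    rw [NMI, NMIAux.vnEnt_Y2, NMIAux.vnEnt_Y2B, NMIAux.vnEnt_Y2A]
    norm_num
  exact ⟨h1, h2, by rw [h1, h2]; norm_num⟩
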